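/- Let V ⊆ Z^d (d ≥ 2) be finite and face-connected, x ∈ B_out(V) an articulation cell with unique neighbor y in a component I of V \ {x} disjoint from B_out(V), and w ≠ y another neighbor of x. Let c be the cell face-adjacent to both the cells of y and w and distinct from x. Then c is empty, i.e., c ∉ V. -/

import Mathlib

/-- The grid graph on `ℤ^d`: cells are face-adjacent iff their centers are at distance 1. -/
def gridGraph (d : ℕ) : SimpleGraph (Fin d → ℤ) where
  Adj a b := (∑ i, |a i - b i|) = 1
  symm := by
    constructor
    intro a b h
    simpa [abs_sub_comm] using h
  loopless := by
    constructor
    intro a h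
    simp at h

/-- Reachability within a set `S` of cells via face-adjacency. -/
def ReachIn (d : ℕ) (S : Set (Fin d → ℤ)) (a b : Fin d → ℤ) : Prop :=
  Relation.ReflTransGen (fun x y => x ∈ S ∧ y ∈ S ∧ (gridGraph d).Adj x y) a b

/-- A set of cells is (face-)connected. -/
def IsConn (d : ℕ) (S : Set (Fin d → ℤ)) : Prop :=
  S.Nonempty ∧ ∀ a ∈ S, ∀ b ∈ S, ReachIn d S a b

/-- The outer boundary modules of `V`: cells of `V` face-adjacent to a cell of an
infinite face-connected component of the complement of `V`. -/
def Bout (d : ℕ) (V : Set (Fin d → ℤ)) : Set (Fin d → ℤ) :=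
  {v | v ∈ V ∧ ∃ c, c ∉ V ∧ (gridGraph d).Adj v c ∧
    Set.Infinite {b | ReachIn d Vᶜ c b}}

private lemma grid_adj_shift1 {d : ℕ} {x e : Fin d → ℤ} (h : (gridGraph d).Adj x e)
    (p : Fin d → ℤ) : (gridGraph d).Adj p (fun i => p i + e i - x i) := by
  have key : ∀ i, |p i - (p i + e i - x i)| = |x i - e i| := by
    intro i
    congr 1
    ring
  show (∑ i, |p i - (p i + e i - x i)|) = 1
  calc (∑ i, |p i - (p i + e i - x i)|) = ∑ i, |x i - e i| := by
        exact Finset.sum_congr rfl (fun i _ => key i)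
    _ = 1 := h

private lemma grid_adj_shift2 {d : ℕ} {x p : Fin d → ℤ} (h : (gridGraph d).Adj x p)
    (e : Fin d → ℤ) : (gridGraph d).Adj e (fun i => p i + e i - x i) := by
  have key : ∀ i, |e i - (p i + e i - x i)| = |x i - p i| := by
    intro i
    congr 1
    ring
  show (∑ i, |e i - (p i + e i - x i)|) = 1
  calc (∑ i, |e i - (p i + e i - x i)|) = ∑ i, |x i - p i| := by
        exact Finset.sum_congr rfl (fun i _ => key i)
    _ = 1 := h

/-- Key step: if `p` is a cell of `V` adjacent to `x`, reachable from `y` inside `V \ {x}`,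
and `e` is an empty cell adjacent to `x` with infinite reach in the complement, and the
fourth cell `p + e - x` of the square differs from `x`, we get a contradiction with
the component of `y` being disjoint from the outer boundary. -/
private lemma key_step {d : ℕ} {V : Set (Fin d → ℤ)} {x y e p : Fin d → ℤ}
    (heV : e ∉ V) (hxe : (gridGraph d).Adj x e)
    (hinf : Set.Infinite {b | ReachIn d Vᶜ e b})
    (hdisj : ∀ b, ReachIn d (V \ {x}) y b → b ∉ Bout d V)
    (hpV : p ∈ V) (hxp : (gridGraph d).Adj x p)
    (hpr : ReachIn d (V \ {x}) y p)
    (hfx : (fun i => p i + e i - x i) ≠ x) : False := by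
  set f : Fin d → ℤ := fun i => p i + e i - x i with hf
  have hpf : (gridGraph d).Adj p f := grid_adj_shift1 hxe p
  have hef : (gridGraph d).Adj e f := grid_adj_shift2 hxp e
  have hpx : p ≠ x := hxp.ne'
  by_cases hfV : f ∈ V
  · -- then f ∈ Bout, but f is reachable from y in V \ {x}
    have hreach : ReachIn d (V \ {x}) y f :=
      hpr.tail ⟨⟨hpV, hpx⟩, ⟨hfV, hfx⟩, hpf⟩
    exact hdisj f hreach ⟨hfV, e, heV, hef.symm, hinf⟩
  · -- then f is in the infinite component, so p ∈ Bout
    have hinf' : Set.Infinite {b | ReachIn d Vᶜ f b} := by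
      apply hinf.mono
      intro b hb
      exact Relation.ReflTransGen.head ⟨hfV, heV, hef.symm⟩ hb
    exact hdisj p hpr ⟨hpV, f, hfV, hpf, hinf'⟩

theorem stmt13 (d : ℕ) (hd : 2 ≤ d) (V : Set (Fin d → ℤ)) (hfin : V.Finite)
    (hconn : IsConn d V) (x : Fin d → ℤ) (hx : x ∈ Bout d V)
    (hart : ¬ IsConn d (V \ {x}))
    (y : Fin d → ℤ) (hy : y ∈ V) (hadj : (gridGraph d).Adj x y)
    (hdisj : ∀ b, ReachIn d (V \ {x}) y b → b ∉ Bout d V)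
    (w : Fin d → ℤ) (hw : w ∈ V) (hwadj : (gridGraph d).Adj x w)
    (hwy : w ≠ y) (hperp : w ≠ fun i => 2 * x i - y i) :
    (fun i => y i + w i - x i) ∉ V := by
  intro hc
  obtain ⟨hxV, e, heV, hxe, hinf⟩ := hx
  by_cases he2 : e = fun i => 2 * x i - y i
  · -- e is opposite to y; use p = w (reachable via the cell c = y + w - x)
    have hcx : (fun i => y i + w i - x i) ≠ x := by
      intro h
      apply hperp
      funext i
      have := congrFun h i
      linarith
    have hyx : y ≠ x := hadj.ne'
    have hwx : w ≠ x := hwadj.ne'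
    have hyc : (gridGraph d).Adj y (fun i => y i + w i - x i) := grid_adj_shift1 hwadj y
    have hcw : (gridGraph d).Adj w (fun i => y i + w i - x i) := grid_adj_shift2 hadj w
    have hreach : ReachIn d (V \ {x}) y w := by
      refine Relation.ReflTransGen.tail (b := fun i => y i + w i - x i)
        (Relation.ReflTransGen.single ?_) ?_
      · exact ⟨⟨hy, hyx⟩, ⟨hc, hcx⟩, hyc⟩
      · exact ⟨⟨hc, hcx⟩, ⟨hw, hwx⟩, hcw.symm⟩
    refine key_step heV hxe hinf hdisj hw hwadj hreach ?_
    intro h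
    apply hwy
    funext i
    have h1 := congrFun h i
    have h2 := congrFun he2 i
    linarith
  · -- e is not opposite to y; use p = y
    refine key_step heV hxe hinf hdisj hy hadj Relation.ReflTransGen.refl ?_
    intro h
    apply he2
    funext i
    have h1 := congrFun h i
    linarith
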